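/- arXiv:2401.12532 — 2 statements merged into one kernel-verified Lean document; each statement's English description precedes it below -/
import Mathlib

section
/- Let d ≥ 1, σ > 1, η > 0, α ≥ 1, 0 < ε < η, and A = 2√d·σ/(σ²−1). Define g(α) = (1+α)/2·η − ε and R_rob(α) = Φ(−A·g(α) + √((A/σ)²·g(α)² + 2·log σ/(σ²−1))). Then R_rob is strictly monotonically decreasing in α. -/
open Real Set

/-- Standard normal cumulative distribution function. -/
noncomputable def stdNormalCDF (z : ℝ) : ℝ :=
  ∫ t in Set.Iic z, (Real.sqrt (2 * Real.pi))⁻¹ * Real.exp (-t ^ 2 / 2)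

lemma gaussInt : MeasureTheory.Integrable
    (fun t : ℝ => (Real.sqrt (2 * Real.pi))⁻¹ * Real.exp (-t ^ 2 / 2)) := by
  have h : MeasureTheory.Integrable (fun t : ℝ => Real.exp (-(1/2) * t ^ 2)) :=
    integrable_exp_neg_mul_sq (by norm_num)
  have : (fun t : ℝ => (Real.sqrt (2 * Real.pi))⁻¹ * Real.exp (-t ^ 2 / 2))
      = fun t : ℝ => (Real.sqrt (2 * Real.pi))⁻¹ * Real.exp (-(1/2) * t ^ 2) := by
    funext t; ring_nf
  rw [this]
  exact h.const_mul _

lemma stdNormalCDF_strictMono : StrictMono stdNormalCDF := by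
  intro a b hab
  have hint := gaussInt
  have h1 : stdNormalCDF b - stdNormalCDF a
      = ∫ t in a..b, (Real.sqrt (2 * Real.pi))⁻¹ * Real.exp (-t ^ 2 / 2) :=
    intervalIntegral.integral_Iic_sub_Iic hint.integrableOn hint.integrableOn
  have hpos : 0 < ∫ t in a..b, (Real.sqrt (2 * Real.pi))⁻¹ * Real.exp (-t ^ 2 / 2) := by
    apply intervalIntegral.intervalIntegral_pos_of_pos_on hint.intervalIntegrable
    · intro x _
      have : (0:ℝ) < Real.sqrt (2 * Real.pi) := Real.sqrt_pos.2 (by positivity)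
      positivity
    · exact hab
  linarith

set_option maxHeartbeats 1000000 in
theorem stmt1 (d : ℕ) (σ η ε : ℝ) (hd : 1 ≤ d) (hσ : 1 < σ) (hη : 0 < η)
    (hε0 : 0 < ε) (hεη : ε < η)
    (A : ℝ) (hA : A = 2 * Real.sqrt d * σ / (σ ^ 2 - 1))
    (g Rrob : ℝ → ℝ)
    (hg : ∀ α, g α = (1 + α) / 2 * η - ε)
    (hR : ∀ α, Rrob α = stdNormalCDF (-A * g α +
      Real.sqrt ((A / σ) ^ 2 * (g α) ^ 2 + 2 * Real.log σ / (σ ^ 2 - 1)))) :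
    StrictAntiOn Rrob (Set.Ici (1 : ℝ)) := by
  have hσ0 : 0 < σ := lt_trans one_pos hσ
  have hσ2 : 0 < σ ^ 2 - 1 := by nlinarith
  have hsd : 0 < Real.sqrt d := Real.sqrt_pos.2 (by exact_mod_cast Nat.lt_of_lt_of_le Nat.zero_lt_one hd)
  have hA0 : 0 < A := by rw [hA]; positivity
  set B := A / σ with hB
  have hB0 : 0 < B := by positivity
  have hBA : B < A := by
    rw [hB, div_lt_iff₀ hσ0]
    nlinarith
  set C := 2 * Real.log σ / (σ ^ 2 - 1) with hC
  have hC0 : 0 < C := by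
    have : 0 < Real.log σ := Real.log_pos hσ
    positivity
  intro x hx y hy hxy
  rw [hR x, hR y]
  apply stdNormalCDF_strictMono
  have hgxy : g x < g y := by rw [hg x, hg y]; nlinarith
  set g1 := g x
  set g2 := g y
  set s1 := Real.sqrt (B ^ 2 * g1 ^ 2 + C) with hs1
  set s2 := Real.sqrt (B ^ 2 * g2 ^ 2 + C) with hs2
  have hs1sq : s1 ^ 2 = B ^ 2 * g1 ^ 2 + C := Real.sq_sqrt (by positivity)
  have hs2sq : s2 ^ 2 = B ^ 2 * g2 ^ 2 + C := Real.sq_sqrt (by positivity)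
  have hs1nn : 0 ≤ s1 := Real.sqrt_nonneg _
  have hs2nn : 0 ≤ s2 := Real.sqrt_nonneg _
  have habs1 : B * |g1| < s1 := Real.lt_sqrt_of_sq_lt (by
    rw [mul_pow, sq_abs]; linarith)
  have habs2 : B * |g2| < s2 := Real.lt_sqrt_of_sq_lt (by
    rw [mul_pow, sq_abs]; linarith)
  have hs1gt : B * g1 < s1 :=
    lt_of_le_of_lt (mul_le_mul_of_nonneg_left (le_abs_self g1) hB0.le) habs1
  have hs1gt' : -(B * g1) < s1 := by
    have := mul_le_mul_of_nonneg_left (neg_abs_le g1) hB0.le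
    nlinarith
  have hs2gt : B * g2 < s2 :=
    lt_of_le_of_lt (mul_le_mul_of_nonneg_left (le_abs_self g2) hB0.le) habs2
  have hs2gt' : -(B * g2) < s2 := by
    have := mul_le_mul_of_nonneg_left (neg_abs_le g2) hB0.le
    nlinarith
  have hkey : s2 - s1 < A * (g2 - g1) := by
    have hss : 0 < s1 + s2 := by linarith
    have heq : (s2 - s1) * (s1 + s2) = B ^ 2 * (g2 + g1) * (g2 - g1) := by
      linear_combination hs2sq - hs1sq
    have t1 : B * (B * g1) < B * s1 := mul_lt_mul_of_pos_left hs1gt hB0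
    have t2 : B * (B * g2) < B * s2 := mul_lt_mul_of_pos_left hs2gt hB0
    have t3 : B * (s1 + s2) < A * (s1 + s2) := mul_lt_mul_of_pos_right hBA hss
    have e : B ^ 2 * (g2 + g1) = B * (B * g1) + B * (B * g2) := by ring
    have h2 : B ^ 2 * (g2 + g1) < A * (s1 + s2) := by
      rw [e]; linarith
    rw [← mul_lt_mul_iff_of_pos_right hss]
    calc (s2 - s1) * (s1 + s2) = B ^ 2 * (g2 + g1) * (g2 - g1) := heq
      _ < A * (s1 + s2) * (g2 - g1) := by
          apply mul_lt_mul_of_pos_right h2 (by linarith)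
      _ = A * (g2 - g1) * (s1 + s2) := by ring
  linarith
end

section
/- Let σ > 1, d ≥ 1, η > 0, α ≥ 1, and let m = (1+α)/2·η. The function b ↦ Φ(−(√d/σ)·m − b/σ) + Φ(−√d·m + b) (the total standard error of the unit-norm linear classifier with bias b on the translated Gaussian mixture) has a critical point at b* = ((σ²+1)/(σ²−1))·√d·m − σ·√((4/(σ²−1)²)·d·m² + 2·log σ/(σ²−1)). -/
open Real Set MeasureTheory


lemma gauss_integrable :
    Integrable (fun t : ℝ => (Real.sqrt (2 * Real.pi))⁻¹ * Real.exp (-t ^ 2 / 2)) := by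
  have h := (integrable_exp_neg_mul_sq (by norm_num : (0:ℝ) < 1/2)).const_mul
    (Real.sqrt (2 * Real.pi))⁻¹
  convert h using 2 with t
  ring_nf

lemma gauss_cont : Continuous (fun t : ℝ => (Real.sqrt (2 * Real.pi))⁻¹ * Real.exp (-t ^ 2 / 2)) := by
  continuity

lemma stdNormalCDF_hasDeriv (z : ℝ) :
    HasDerivAt stdNormalCDF ((Real.sqrt (2 * Real.pi))⁻¹ * Real.exp (-z ^ 2 / 2)) z := by
  set g : ℝ → ℝ := fun t => (Real.sqrt (2 * Real.pi))⁻¹ * Real.exp (-t ^ 2 / 2) with hg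
  have hint := gauss_integrable
  have h1 : HasDerivAt (fun u => (∫ t in Set.Iic (0:ℝ), g t) + ∫ t in (0:ℝ)..u, g t) (g z) z := by
    exact (intervalIntegral.integral_hasDerivAt_right
      (hint.intervalIntegrable)
      (gauss_cont.stronglyMeasurableAtFilter _ _)
      (gauss_cont.continuousAt)).const_add (∫ t in Set.Iic (0:ℝ), g t)
  have heq : stdNormalCDF = fun u => (∫ t in Set.Iic (0:ℝ), g t) + ∫ t in (0:ℝ)..u, g t := by
    funext u
    have := intervalIntegral.integral_Iic_sub_Iic (hint.integrableOn) (hint.integrableOn)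
      (a := 0) (b := u) (μ := volume)
    simp only [stdNormalCDF]
    linarith [this]
  rw [heq]; exact h1

theorem stmt10 (d : ℕ) (σ η α m : ℝ) (hd : 1 ≤ d) (hσ : 1 < σ) (hη : 0 < η)
    (hα : 1 ≤ α) (hm : m = (1 + α) / 2 * η)
    (F : ℝ → ℝ)
    (hF : ∀ b, F b = stdNormalCDF (-(Real.sqrt d / σ) * m - b / σ) +
      stdNormalCDF (-Real.sqrt d * m + b))
    (bstar : ℝ)
    (hb : bstar = (σ ^ 2 + 1) / (σ ^ 2 - 1) * Real.sqrt d * m -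
      σ * Real.sqrt (4 / (σ ^ 2 - 1) ^ 2 * d * m ^ 2 + 2 * Real.log σ / (σ ^ 2 - 1))) :
    deriv F bstar = 0 := by
  have hσ0 : 0 < σ := lt_trans one_pos hσ
  have hσne : σ ≠ 0 := ne_of_gt hσ0
  have hk : (0:ℝ) < σ ^ 2 - 1 := by nlinarith
  have hkne : σ ^ 2 - 1 ≠ 0 := ne_of_gt hk
  have hL : 0 < Real.log σ := Real.log_pos hσ
  set s : ℝ := Real.sqrt d * m with hs
  set L : ℝ := Real.log σ with hLdef
  set A : ℝ := 4 / (σ ^ 2 - 1) ^ 2 * d * m ^ 2 + 2 * L / (σ ^ 2 - 1) with hA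
  have hdm : (d:ℝ) * m ^ 2 = s ^ 2 := by
    rw [hs, mul_pow, Real.sq_sqrt (Nat.cast_nonneg d)]
  have hA0 : 0 ≤ A := by
    rw [hA]
    have h1 : (0:ℝ) ≤ 4 / (σ ^ 2 - 1) ^ 2 * d * m ^ 2 := by positivity
    have h2 : (0:ℝ) ≤ 2 * L / (σ ^ 2 - 1) := div_nonneg (by linarith) hk.le
    linarith
  set R : ℝ := Real.sqrt A with hR
  have hR2 : (σ ^ 2 - 1) ^ 2 * R ^ 2 = 4 * s ^ 2 + 2 * L * (σ ^ 2 - 1) := by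
    rw [hR, Real.sq_sqrt hA0, hA]
    field_simp
    linear_combination 4 * hdm
  have hbs : bstar = (σ ^ 2 + 1) / (σ ^ 2 - 1) * s - σ * R := by
    rw [hb, hR, hA, mul_assoc]
  have hb' : (σ ^ 2 - 1) * bstar = (σ ^ 2 + 1) * s - σ * (σ ^ 2 - 1) * R := by
    rw [hbs]; field_simp
  set a : ℝ := -(Real.sqrt d / σ) * m - bstar / σ with ha
  set c : ℝ := -Real.sqrt d * m + bstar with hc
  have ha2 : σ ^ 2 * a ^ 2 = (s + bstar) ^ 2 := by
    rw [ha, hs]; field_simp; ring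
  have hc' : c = bstar - s := by rw [hc, hs]; ring
  have hGk : (σ ^ 2 - 1) ^ 2 * (σ ^ 2 * c ^ 2) =
      (σ ^ 2 - 1) ^ 2 * ((s + bstar) ^ 2 + 2 * σ ^ 2 * L) := by
    rw [hc']
    linear_combination ((σ ^ 2 - 1) * ((σ ^ 2 - 1) * bstar - (σ ^ 2 + 1) * s
      - σ * (σ ^ 2 - 1) * R)) * hb' + (σ ^ 2 * (σ ^ 2 - 1)) * hR2
  have hmain : σ ^ 2 * c ^ 2 = (s + bstar) ^ 2 + 2 * σ ^ 2 * L :=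
    mul_left_cancel₀ (pow_ne_zero 2 hkne) hGk
  have hkey : c ^ 2 = a ^ 2 + 2 * L := by
    have : σ ^ 2 * c ^ 2 = σ ^ 2 * (a ^ 2 + 2 * L) := by
      rw [hmain, mul_add, ha2]; ring
    exact mul_left_cancel₀ (pow_ne_zero 2 hσne) this
  -- derivative
  have hF' : F = fun b => stdNormalCDF (-(Real.sqrt d / σ) * m - b / σ) +
      stdNormalCDF (-Real.sqrt d * m + b) := funext hF
  have hd1 : HasDerivAt (fun b : ℝ => -(Real.sqrt d / σ) * m - b / σ) (-σ⁻¹) bstar := by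
    simpa [one_div] using ((hasDerivAt_id bstar).div_const σ).const_sub (-(Real.sqrt d / σ) * m)
  have hd2 : HasDerivAt (fun b : ℝ => -Real.sqrt d * m + b) 1 bstar := by
    simpa using (hasDerivAt_id bstar).const_add (-Real.sqrt d * m)
  have hD1 : HasDerivAt (fun b : ℝ => stdNormalCDF (-(Real.sqrt d / σ) * m - b / σ))
      (((Real.sqrt (2 * Real.pi))⁻¹ * Real.exp (-a ^ 2 / 2)) * (-σ⁻¹)) bstar :=
    HasDerivAt.comp (h := fun b : ℝ => -(Real.sqrt d / σ) * m - b / σ) bstar (stdNormalCDF_hasDeriv a) hd1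
  have hD2 : HasDerivAt (fun b : ℝ => stdNormalCDF (-Real.sqrt d * m + b))
      (((Real.sqrt (2 * Real.pi))⁻¹ * Real.exp (-c ^ 2 / 2)) * 1) bstar :=
    (stdNormalCDF_hasDeriv c).comp bstar hd2
  have hDF : HasDerivAt F
      (((Real.sqrt (2 * Real.pi))⁻¹ * Real.exp (-a ^ 2 / 2)) * (-σ⁻¹) +
        ((Real.sqrt (2 * Real.pi))⁻¹ * Real.exp (-c ^ 2 / 2)) * 1) bstar := by
    rw [hF']; exact hD1.add hD2
  rw [hDF.deriv]
  have hec : Real.exp (-c ^ 2 / 2) = Real.exp (-a ^ 2 / 2) * σ⁻¹ := by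
    rw [hkey]
    rw [← Real.exp_log hσ0, ← hLdef, ← Real.exp_neg, ← Real.exp_add]
    ring_nf
  rw [hec]; ring
end
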